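/- Let λ : TG → GT be an entwining from a monad T = (T, m, e) to a comonad G = (G, δ, ε) on a category A, Ĝ the lifting of G to A_T, K' : A → (A_T)^{Ĝ} a functor with U^{Ĝ} ∘ K' = φ_T, and β_K : φ_T → Ĝφ_T the corresponding left Ĝ-comodule structure on φ_T. Suppose that (i) A admits equalisers of coreflexive pairs and both T and G have right adjoints, or (ii) A admits small colimits and both T and G preserve them. Then (φ_T, β_K) is Ĝ-Galois if and only if (T, U_T(β_K)) is G-Galois, i.e., writing β = U_T(β_K) : T → GT, the composite γ_T = Gm ∘ βT : TT → GT is an isomorphism. -/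

import Mathlib

open CategoryTheory CategoryTheory.Limits

namespace Paper


variable {A : Type*} [Category A]

/-- An entwining (mixed distributive law) `λ : TG ⟶ GT` from a monad `T` to a comonad `G`. -/
structure Entwining (T : Monad A) (G : Comonad A) where
  lam : (G : A ⥤ A) ⋙ (T : A ⥤ A) ⟶ (T : A ⥤ A) ⋙ (G : A ⥤ A)
  comp_mul : ∀ a : A, T.μ.app ((G : A ⥤ A).obj a) ≫ lam.app a =
      (T : A ⥤ A).map (lam.app a) ≫ lam.app ((T : A ⥤ A).obj a) ≫
        (G : A ⥤ A).map (T.μ.app a)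
  comp_unit : ∀ a : A, T.η.app ((G : A ⥤ A).obj a) ≫ lam.app a = (G : A ⥤ A).map (T.η.app a)
  delta_comp : ∀ a : A, lam.app a ≫ G.δ.app ((T : A ⥤ A).obj a) =
      (T : A ⥤ A).map (G.δ.app a) ≫ lam.app ((G : A ⥤ A).obj a) ≫
        (G : A ⥤ A).map (lam.app a)
  eps_comp : ∀ a : A, lam.app a ≫ G.ε.app ((T : A ⥤ A).obj a) = (T : A ⥤ A).map (G.ε.app a)

namespace Entwining

variable {T : Monad A} {G : Comonad A} (E : Entwining T G)

lemma lam_natural {a b : A} (f : a ⟶ b) :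
    (T : A ⥤ A).map ((G : A ⥤ A).map f) ≫ E.lam.app b =
      E.lam.app a ≫ (G : A ⥤ A).map ((T : A ⥤ A).map f) :=
  E.lam.naturality f

/-- The value of the lifted comonad `Ĝ` on an object of `A_T`:
`Ĝ(a, h) = (G(a), G(h) ∘ λ_a)`. -/
@[simps]
def liftAlgebra (X : T.Algebra) : T.Algebra where
  A := (G : A ⥤ A).obj X.A
  a := E.lam.app X.A ≫ (G : A ⥤ A).map X.a
  unit := by
    rw [← Category.assoc, E.comp_unit, ← Functor.map_comp, X.unit]
    simp
  assoc := by
    calc T.μ.app ((G : A ⥤ A).obj X.A) ≫ E.lam.app X.A ≫ (G : A ⥤ A).map X.a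
        = (T.μ.app ((G : A ⥤ A).obj X.A) ≫ E.lam.app X.A) ≫ (G : A ⥤ A).map X.a := by
          rw [Category.assoc]
      _ = (T : A ⥤ A).map (E.lam.app X.A) ≫ E.lam.app ((T : A ⥤ A).obj X.A) ≫
            (G : A ⥤ A).map (T.μ.app X.A) ≫ (G : A ⥤ A).map X.a := by
          rw [E.comp_mul]; simp [Category.assoc]
      _ = (T : A ⥤ A).map (E.lam.app X.A) ≫ E.lam.app ((T : A ⥤ A).obj X.A) ≫
            (G : A ⥤ A).map ((T : A ⥤ A).map X.a) ≫ (G : A ⥤ A).map X.a := by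
          rw [← Functor.map_comp, X.assoc, Functor.map_comp]
      _ = (T : A ⥤ A).map (E.lam.app X.A) ≫ (T : A ⥤ A).map ((G : A ⥤ A).map X.a) ≫
            E.lam.app X.A ≫ (G : A ⥤ A).map X.a := by
          rw [← Category.assoc (E.lam.app ((T : A ⥤ A).obj X.A)), ← E.lam_natural X.a]
          simp [Category.assoc]
      _ = (T : A ⥤ A).map (E.lam.app X.A ≫ (G : A ⥤ A).map X.a) ≫
            E.lam.app X.A ≫ (G : A ⥤ A).map X.a := by
          rw [Functor.map_comp, Category.assoc]

/-- The lifting `Ĝ` of the comonad `G` to the Eilenberg–Moore category `A_T`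
along the entwining `λ`. -/
@[simps]
def liftedComonad : Comonad (T.Algebra) where
  obj X := E.liftAlgebra X
  map {X Y} f :=
    { f := (G : A ⥤ A).map f.f
      h := by
        show (T : A ⥤ A).map ((G : A ⥤ A).map f.f) ≫ E.lam.app Y.A ≫ (G : A ⥤ A).map Y.a = (E.lam.app X.A ≫ (G : A ⥤ A).map X.a) ≫ (G : A ⥤ A).map f.f
        calc (T : A ⥤ A).map ((G : A ⥤ A).map f.f) ≫ E.lam.app Y.A ≫ (G : A ⥤ A).map Y.a
            = (E.lam.app X.A ≫ (G : A ⥤ A).map ((T : A ⥤ A).map f.f)) ≫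
                (G : A ⥤ A).map Y.a := by
              rw [← Category.assoc, E.lam_natural f.f]
          _ = E.lam.app X.A ≫ (G : A ⥤ A).map ((T : A ⥤ A).map f.f ≫ Y.a) := by
              rw [Category.assoc, ← Functor.map_comp]
          _ = E.lam.app X.A ≫ (G : A ⥤ A).map (X.a ≫ f.f) := by rw [f.h]
          _ = (E.lam.app X.A ≫ (G : A ⥤ A).map X.a) ≫ (G : A ⥤ A).map f.f := by
              rw [Functor.map_comp, Category.assoc] }
  map_id X := by ext; exact (G : A ⥤ A).map_id X.A
  map_comp f g := by ext; exact (G : A ⥤ A).map_comp f.f g.f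
  ε :=
    { app := fun X =>
        { f := G.ε.app X.A
          h := by
            show (T : A ⥤ A).map (G.ε.app X.A) ≫ X.a = (E.lam.app X.A ≫ (G : A ⥤ A).map X.a) ≫ G.ε.app X.A
            have hnat : (G : A ⥤ A).map X.a ≫ G.ε.app X.A =
                G.ε.app ((T : A ⥤ A).obj X.A) ≫ X.a := by
              simpa using (G.ε.naturality X.a).symm
            rw [Category.assoc, hnat, ← Category.assoc, E.eps_comp] }
      naturality := fun X Y f => by ext; exact G.ε.naturality f.f }
  δ :=
    { app := fun X =>
        { f := G.δ.app X.A
          h := by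
            dsimp
            calc (T : A ⥤ A).map (G.δ.app X.A) ≫ E.lam.app ((G : A ⥤ A).obj X.A) ≫
                  (G : A ⥤ A).map (E.lam.app X.A ≫ (G : A ⥤ A).map X.a)
                = (T : A ⥤ A).map (G.δ.app X.A) ≫ E.lam.app ((G : A ⥤ A).obj X.A) ≫
                    (G : A ⥤ A).map (E.lam.app X.A) ≫
                    (G : A ⥤ A).map ((G : A ⥤ A).map X.a) := by
                  rw [Functor.map_comp]
              _ = (E.lam.app X.A ≫ G.δ.app ((T : A ⥤ A).obj X.A)) ≫
                    (G : A ⥤ A).map ((G : A ⥤ A).map X.a) := by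
                  rw [E.delta_comp]; simp [Category.assoc]
              _ = E.lam.app X.A ≫ (G : A ⥤ A).map X.a ≫ G.δ.app X.A := by
                  have hnat : (G : A ⥤ A).map X.a ≫ G.δ.app X.A =
                      G.δ.app ((T : A ⥤ A).obj X.A) ≫
                        (G : A ⥤ A).map ((G : A ⥤ A).map X.a) := by
                    simpa using (G.δ.naturality X.a).symm
                  rw [hnat, Category.assoc]
              _ = (E.lam.app X.A ≫ (G : A ⥤ A).map X.a) ≫ G.δ.app X.A := by
                  rw [Category.assoc] }
      naturality := fun X Y f => by ext; exact G.δ.naturality f.f }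
  coassoc X := by ext; exact G.coassoc X.A
  left_counit X := by ext; exact G.left_counit X.A
  right_counit X := by ext; exact G.right_counit X.A


/-- The value of the lifted monad `T̂` on an object of `A^G`: `T̂(a, θ) = (T(a), λ_a ∘ T(θ))`. -/
@[simps]
def liftCoalgebra (X : G.Coalgebra) : G.Coalgebra where
  A := (T : A ⥤ A).obj X.A
  a := (T : A ⥤ A).map X.a ≫ E.lam.app X.A
  counit := by
    rw [Category.assoc, E.eps_comp, ← Functor.map_comp, X.counit]
    simp
  coassoc := by
    calc ((T : A ⥤ A).map X.a ≫ E.lam.app X.A) ≫ G.δ.app ((T : A ⥤ A).obj X.A)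
        = (T : A ⥤ A).map X.a ≫ (T : A ⥤ A).map (G.δ.app X.A) ≫
            E.lam.app ((G : A ⥤ A).obj X.A) ≫ (G : A ⥤ A).map (E.lam.app X.A) := by
          rw [Category.assoc, E.delta_comp]
      _ = (T : A ⥤ A).map (X.a ≫ G.δ.app X.A) ≫
            E.lam.app ((G : A ⥤ A).obj X.A) ≫ (G : A ⥤ A).map (E.lam.app X.A) := by
          rw [Functor.map_comp, Category.assoc]
      _ = (T : A ⥤ A).map X.a ≫ (T : A ⥤ A).map ((G : A ⥤ A).map X.a) ≫
            E.lam.app ((G : A ⥤ A).obj X.A) ≫ (G : A ⥤ A).map (E.lam.app X.A) := by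
          rw [X.coassoc, Functor.map_comp, Category.assoc]
      _ = (T : A ⥤ A).map X.a ≫ E.lam.app X.A ≫
            (G : A ⥤ A).map ((T : A ⥤ A).map X.a) ≫ (G : A ⥤ A).map (E.lam.app X.A) := by
          rw [← Category.assoc ((T : A ⥤ A).map ((G : A ⥤ A).map X.a)), E.lam_natural X.a]
          simp only [Category.assoc]
      _ = ((T : A ⥤ A).map X.a ≫ E.lam.app X.A) ≫
            (G : A ⥤ A).map ((T : A ⥤ A).map X.a ≫ E.lam.app X.A) := by
          rw [Functor.map_comp]
          simp only [Category.assoc]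


/-- The lifting of the endofunctor `T` to `A^G`. -/
@[simps]
def liftFunctorT : G.Coalgebra ⥤ G.Coalgebra where
  obj X := E.liftCoalgebra X
  map {X Y} f :=
    { f := (T : A ⥤ A).map f.f
      h := by
        show ((T : A ⥤ A).map X.a ≫ E.lam.app X.A) ≫ (G : A ⥤ A).map ((T : A ⥤ A).map f.f) = (T : A ⥤ A).map f.f ≫ (T : A ⥤ A).map Y.a ≫ E.lam.app Y.A
        calc ((T : A ⥤ A).map X.a ≫ E.lam.app X.A) ≫ (G : A ⥤ A).map ((T : A ⥤ A).map f.f)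
            = (T : A ⥤ A).map X.a ≫ E.lam.app X.A ≫
                (G : A ⥤ A).map ((T : A ⥤ A).map f.f) := by rw [Category.assoc]
          _ = (T : A ⥤ A).map X.a ≫ (T : A ⥤ A).map ((G : A ⥤ A).map f.f) ≫
                E.lam.app Y.A := by rw [← E.lam_natural f.f]
          _ = (T : A ⥤ A).map (X.a ≫ (G : A ⥤ A).map f.f) ≫ E.lam.app Y.A := by
              rw [Functor.map_comp, Category.assoc]
          _ = (T : A ⥤ A).map (f.f ≫ Y.a) ≫ E.lam.app Y.A := by rw [f.h]
          _ = (T : A ⥤ A).map f.f ≫ (T : A ⥤ A).map Y.a ≫ E.lam.app Y.A := by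
              rw [Functor.map_comp, Category.assoc] }
  map_id X := by ext; exact (T : A ⥤ A).map_id X.A
  map_comp f g := by ext; exact (T : A ⥤ A).map_comp f.f g.f

/-- The unit of the lifted monad. -/
@[simps]
def liftEta : 𝟭 (G.Coalgebra) ⟶ E.liftFunctorT where
  app X :=
    { f := T.η.app X.A
      h := by
        show X.a ≫ (G : A ⥤ A).map (T.η.app X.A) = T.η.app X.A ≫ (T : A ⥤ A).map X.a ≫ E.lam.app X.A
        have hnat : X.a ≫ T.η.app ((G : A ⥤ A).obj X.A) =
            T.η.app X.A ≫ (T : A ⥤ A).map X.a := by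
          simpa using T.η.naturality X.a
        rw [← Category.assoc, ← hnat, Category.assoc, E.comp_unit] }
  naturality X Y f := by
    ext
    show f.f ≫ T.η.app Y.A = T.η.app X.A ≫ (T : A ⥤ A).map f.f
    simpa using T.η.naturality f.f

/-- The multiplication of the lifted monad. -/
@[simps]
def liftMu : E.liftFunctorT ⋙ E.liftFunctorT ⟶ E.liftFunctorT where
  app X :=
    { f := T.μ.app X.A
      h := by
        dsimp
        have hnat : (T : A ⥤ A).map ((T : A ⥤ A).map X.a) ≫
              T.μ.app ((G : A ⥤ A).obj X.A) = T.μ.app X.A ≫ (T : A ⥤ A).map X.a := by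
          simpa using T.μ.naturality X.a
        calc ((T : A ⥤ A).map ((T : A ⥤ A).map X.a ≫ E.lam.app X.A) ≫
                E.lam.app ((T : A ⥤ A).obj X.A)) ≫ (G : A ⥤ A).map (T.μ.app X.A)
            = (T : A ⥤ A).map ((T : A ⥤ A).map X.a) ≫
                ((T : A ⥤ A).map (E.lam.app X.A) ≫ E.lam.app ((T : A ⥤ A).obj X.A) ≫
                  (G : A ⥤ A).map (T.μ.app X.A)) := by
              rw [Functor.map_comp]
              simp only [Category.assoc]
          _ = (T : A ⥤ A).map ((T : A ⥤ A).map X.a) ≫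
                T.μ.app ((G : A ⥤ A).obj X.A) ≫ E.lam.app X.A := by
              rw [← E.comp_mul]
          _ = (T.μ.app X.A ≫ (T : A ⥤ A).map X.a) ≫ E.lam.app X.A := by
              rw [← Category.assoc, hnat]
          _ = T.μ.app X.A ≫ (T : A ⥤ A).map X.a ≫ E.lam.app X.A := by
              rw [Category.assoc] }
  naturality X Y f := by
    ext
    show (T : A ⥤ A).map ((T : A ⥤ A).map f.f) ≫ T.μ.app Y.A =
      T.μ.app X.A ≫ (T : A ⥤ A).map f.f
    simpa using T.μ.naturality f.f

/-- The lifting `T̂` of the monad `T` to the Eilenberg–Moore category `A^G`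
along the entwining `λ`. -/
def liftedMonad : Monad (G.Coalgebra) where
  toFunctor := E.liftFunctorT
  η := E.liftEta
  μ := E.liftMu
  assoc X := by ext; exact T.assoc X.A
  left_unit X := by ext; exact T.left_unit X.A
  right_unit X := by ext; exact T.right_unit X.A


end Entwining


namespace Entwining

variable {A : Type*} [Category A] {F : Monad A} {G : Comonad A} (E : Entwining F G)

/-- The canonical natural transformation assembling the structure morphisms of
coalgebras over a comonad. -/
@[simps]
def coalgStructNat {C : Type*} [Category C] (H : Comonad C) :
    H.forget ⟶ H.forget ⋙ (H : C ⥤ C) where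
  app X := X.a
  naturality X Y f := by exact f.h.symm

/-- The left `Ĝ`-comodule structure `β_{K'} : φ_F ⟶ Ĝφ_F` on the free functor `φ_F`
corresponding to a functor `K' : A ⥤ (A_F)^{Ĝ}` with `U^{Ĝ} ∘ K' = φ_F`. -/
def structOfK (K' : A ⥤ E.liftedComonad.Coalgebra)
    (hK' : K' ⋙ Comonad.forget E.liftedComonad = F.free) :
    F.free ⟶ F.free ⋙ (E.liftedComonad : F.Algebra ⥤ F.Algebra) :=
  eqToHom hK'.symm ≫ Functor.whiskerLeft K' (coalgStructNat E.liftedComonad) ≫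
    Functor.whiskerRight (eqToHom hK') (E.liftedComonad : F.Algebra ⥤ F.Algebra)

/-- The underlying left `G`-comodule structure `β = U_F(β_{K'}) : F ⟶ GF` on the
functor `F` induced by a functor `K'` as above. -/
def inducedComod (K' : A ⥤ E.liftedComonad.Coalgebra)
    (hK' : K' ⋙ Comonad.forget E.liftedComonad = F.free) :
    (F : A ⥤ A) ⟶ (F : A ⥤ A) ⋙ (G : A ⥤ A) :=
  Functor.whiskerRight (E.structOfK K' hK') F.forget


end Entwining

/-- Abstract form of the Galois computation. -/
lemma abstract_galois {A : Type*} [Category A] (Gf : A ⥤ A)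
    {x p q r : A} (h : p ⟶ x) (e : x ⟶ p) (ep : p ⟶ q) (m : q ⟶ p)
    (Th : q ⟶ p) (TTh : r ⟶ q) (Tm : r ⟶ q) (se : p ⟶ q)
    (t : p ⟶ Gf.obj x) (g1 : q ⟶ Gf.obj p) (g2 : r ⟶ Gf.obj q)
    [IsIso g1] [IsIso g2]
    (R1 : Th ≫ t = g1 ≫ Gf.map h)
    (R2 : TTh ≫ g1 = g2 ≫ Gf.map Th)
    (R3 : Tm ≫ g1 = g2 ≫ Gf.map m)
    (R4 : e ≫ h = 𝟙 x)
    (R5 : ep ≫ m = 𝟙 p)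
    (R6 : ep ≫ Th = h ≫ e)
    (R7 : TTh ≫ Th = Tm ≫ Th)
    (R8 : se ≫ Th = 𝟙 p) :
    IsIso t := by
  have hepi : Epi Th := @IsSplitEpi.epi _ _ _ _ _ ⟨⟨⟨se, R8⟩⟩⟩
  have E1 : Gf.map Th ≫ inv g1 = inv g2 ≫ TTh := by
    rw [IsIso.comp_inv_eq, Category.assoc, R2, IsIso.inv_hom_id_assoc]
  have E2 : inv g2 ≫ Tm = Gf.map m ≫ inv g1 := by
    rw [IsIso.inv_comp_eq, ← Category.assoc, ← R3, Category.assoc, IsIso.hom_inv_id,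
      Category.comp_id]
  refine ⟨Gf.map e ≫ inv g1 ≫ Th, ?_, ?_⟩
  · rw [← cancel_epi Th, Category.comp_id]
    calc Th ≫ t ≫ Gf.map e ≫ inv g1 ≫ Th
        = (Th ≫ t) ≫ Gf.map e ≫ inv g1 ≫ Th := by simp only [Category.assoc]
      _ = g1 ≫ Gf.map (h ≫ e) ≫ inv g1 ≫ Th := by
          rw [R1]; simp only [Functor.map_comp, Category.assoc]
      _ = g1 ≫ Gf.map ep ≫ (Gf.map Th ≫ inv g1) ≫ Th := by
          rw [← R6]; simp only [Functor.map_comp, Category.assoc]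
      _ = g1 ≫ Gf.map ep ≫ inv g2 ≫ TTh ≫ Th := by
          rw [E1]; simp only [Category.assoc]
      _ = g1 ≫ Gf.map ep ≫ (inv g2 ≫ Tm) ≫ Th := by
          rw [R7]; simp only [Category.assoc]
      _ = g1 ≫ Gf.map (ep ≫ m) ≫ inv g1 ≫ Th := by
          rw [E2]; simp only [Functor.map_comp, Category.assoc]
      _ = Th := by
          rw [R5, Gf.map_id, Category.id_comp, IsIso.hom_inv_id_assoc]
  · calc (Gf.map e ≫ inv g1 ≫ Th) ≫ t
        = Gf.map e ≫ inv g1 ≫ (Th ≫ t) := by simp only [Category.assoc]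
      _ = Gf.map e ≫ inv g1 ≫ g1 ≫ Gf.map h := by rw [R1]
      _ = Gf.map (e ≫ h) := by
          rw [IsIso.inv_hom_id_assoc, ← Gf.map_comp]
      _ = 𝟙 _ := by rw [R4, Gf.map_id]

/-- Core computation: if `β : T ⟶ TG` is natural and the Galois map
`γ_b = β_{Tb} ≫ Gμ_b` is an isomorphism for every `b`, then for every `T`-algebra
`(a, h)` the map `β_a ≫ Gh` is an isomorphism. -/
lemma core_galois {A : Type*} [Category A] {T : Monad A} {G : Comonad A}
    (β : (T : A ⥤ A) ⟶ (T : A ⥤ A) ⋙ (G : A ⥤ A))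
    (hγ : ∀ b : A, IsIso (β.app ((T : A ⥤ A).obj b) ≫ (G : A ⥤ A).map (T.μ.app b)))
    (a : A) (h : (T : A ⥤ A).obj a ⟶ a)
    (hu : T.η.app a ≫ h = 𝟙 a)
    (ha : (T : A ⥤ A).map h ≫ h = T.μ.app a ≫ h) :
    IsIso (β.app a ≫ (G : A ⥤ A).map h) := by
  haveI := hγ a
  haveI := hγ ((T : A ⥤ A).obj a)
  have nβ : ∀ {b c : A} (f : b ⟶ c), (T : A ⥤ A).map f ≫ β.app c =
      β.app b ≫ (G : A ⥤ A).map ((T : A ⥤ A).map f) := fun f => β.naturality f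
  have nμ : (T : A ⥤ A).map ((T : A ⥤ A).map h) ≫ T.μ.app a =
      T.μ.app ((T : A ⥤ A).obj a) ≫ (T : A ⥤ A).map h := T.μ.naturality h
  have nη : h ≫ T.η.app a = T.η.app ((T : A ⥤ A).obj a) ≫ (T : A ⥤ A).map h :=
    T.η.naturality h
  refine abstract_galois (G : A ⥤ A) h (T.η.app a) (T.η.app ((T : A ⥤ A).obj a))
    (T.μ.app a) ((T : A ⥤ A).map h) ((T : A ⥤ A).map ((T : A ⥤ A).map h))
    ((T : A ⥤ A).map (T.μ.app a)) ((T : A ⥤ A).map (T.η.app a))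
    (β.app a ≫ (G : A ⥤ A).map h)
    (β.app ((T : A ⥤ A).obj a) ≫ (G : A ⥤ A).map (T.μ.app a))
    (β.app ((T : A ⥤ A).obj ((T : A ⥤ A).obj a)) ≫
      (G : A ⥤ A).map (T.μ.app ((T : A ⥤ A).obj a)))
    ?_ ?_ ?_ hu (T.left_unit a) nη.symm ?_ ?_
  · -- R1
    rw [← Category.assoc, nβ]
    simp only [Category.assoc, ← Functor.map_comp]
    rw [ha]
  · -- R2
    rw [← Category.assoc, nβ]
    simp only [Category.assoc, ← Functor.map_comp]
    rw [nμ]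
  · -- R3
    rw [← Category.assoc, nβ]
    simp only [Category.assoc, ← Functor.map_comp]
    rw [T.assoc]
  · -- R7
    rw [← Functor.map_comp, ha, Functor.map_comp]
  · -- R8
    rw [← Functor.map_comp, hu]
    exact (T : A ⥤ A).map_id a

open Entwining in
/-- **Proposition 2.4.**  Let `λ : TG ⟶ GT` be an entwining from a monad `T` to a
comonad `G` on `A`, `Ĝ` the lifting of `G` to `A_T`, `K' : A ⥤ (A_T)^{Ĝ}` a functor with
`U^{Ĝ} ∘ K' = φ_T` and `β_K : φ_T ⟶ Ĝφ_T` the corresponding `Ĝ`-comodule structure on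
`φ_T`.  Suppose that (i) `A` admits equalisers of coreflexive pairs and both `T` and `G`
have right adjoints, or (ii) `A` admits small colimits and both `T` and `G` preserve
them.  Then `(φ_T, β_K)` is `Ĝ`-Galois (the comonad morphism `t_K : φ_T U_T ⟶ Ĝ` is an
isomorphism) if and only if `(T, U_T(β_K))` is `G`-Galois (the composite
`γ_T = Gm ∘ βT : TT ⟶ GT` is an isomorphism). -/
theorem statement10 {A : Type*} [Category A] (T : Monad A) (G : Comonad A)
    (E : Entwining T G) (K' : A ⥤ E.liftedComonad.Coalgebra)
    (hK' : K' ⋙ Comonad.forget E.liftedComonad = T.free)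
    (hyp : (HasCoreflexiveEqualizers A ∧
        (T : A ⥤ A).IsLeftAdjoint ∧ (G : A ⥤ A).IsLeftAdjoint) ∨
      (HasColimits A ∧ Nonempty (PreservesColimits (T : A ⥤ A)) ∧
        Nonempty (PreservesColimits (G : A ⥤ A)))) :
    (∀ X : T.Algebra,
        IsIso ((E.structOfK K' hK').app X.A ≫ E.liftedComonad.map (T.adj.counit.app X))) ↔
      (∀ a : A,
        IsIso ((E.inducedComod K' hK').app ((T : A ⥤ A).obj a) ≫
          (G : A ⥤ A).map (T.μ.app a))) := by
  clear hyp
  have hf : ∀ X : T.Algebra,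
      ((E.structOfK K' hK').app X.A ≫ E.liftedComonad.map (T.adj.counit.app X)).f =
        (E.inducedComod K' hK').app X.A ≫ (G : A ⥤ A).map X.a := by
    intro X
    rw [Monad.Algebra.comp_f]
    congr 1
    show ((E.liftedComonad).map (T.adj.counit.app X)).f = (G : A ⥤ A).map X.a
    simp [Entwining.liftedComonad]
    all_goals rfl
  constructor
  · intro h a
    haveI := h (T.free.obj a)
    have h0 : IsIso ((Monad.forget T).map ((E.structOfK K' hK').app (T.free.obj a).A ≫
        E.liftedComonad.map (T.adj.counit.app (T.free.obj a)))) := inferInstance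
    have h1 : IsIso (((E.structOfK K' hK').app (T.free.obj a).A ≫
        E.liftedComonad.map (T.adj.counit.app (T.free.obj a))).f) := h0
    rw [hf (T.free.obj a)] at h1
    exact h1
  · intro h X
    have h2 : IsIso ((E.inducedComod K' hK').app X.A ≫ (G : A ⥤ A).map X.a) :=
      core_galois (E.inducedComod K' hK') h X.A X.a X.unit X.assoc.symm
    have h3 : IsIso (((E.structOfK K' hK').app X.A ≫
        E.liftedComonad.map (T.adj.counit.app X)).f) := by
      rw [hf X]; exact h2
    haveI : IsIso ((Monad.forget T).map ((E.structOfK K' hK').app X.A ≫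
        E.liftedComonad.map (T.adj.counit.app X))) := h3
    exact isIso_of_reflects_iso _ (Monad.forget T)

end Paper
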